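/- Let k ≥ 1 and let M be a symmetric k×k real matrix all of whose entries are nonnegative and all of whose diagonal entries are strictly positive. Let v be the minimum of uᵀMu over the simplex {u ∈ ℝᵏ : u ≥ 0 coordinatewise, Σᵢ uᵢ = 1} (this minimum exists by compactness). Then there exists a nonempty subset S ⊆ {1,…,k} such that the principal submatrix M_S = (M_{ij})_{i,j ∈ S} is invertible, v = 1/(𝟙ᵀ M_S⁻¹ 𝟙) where 𝟙 is the all-ones vector indexed by S, and v also equals the minimum of wᵀ M_S w over the simplex {w ∈ ℝ^S : w ≥ 0 coordinatewise, Σ_{i∈S} wᵢ = 1}. -/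

import Mathlib

private lemma aux_zero (a B c : ℝ) (hc : 0 < c)
    (h : ∀ t : ℝ, |t| ≤ c → 0 ≤ 2*t*a + t^2*B) : a = 0 := by
  by_contra ha
  have hA : 0 < |a| := abs_pos.mpr ha
  have hB : 0 < |B| + 1 := by positivity
  set c' := min c (|a|/(|B|+1)) with hc'def
  have hc'pos : 0 < c' := lt_min hc (by positivity)
  have hc'le : c' * (|B|+1) ≤ |a| := by
    have h2 : c' ≤ |a|/(|B|+1) := min_le_right _ _
    calc c' * (|B|+1) ≤ (|a|/(|B|+1)) * (|B|+1) := by nlinarith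
    _ = |a| := by field_simp
  set t := -(c' * (a / |a|)) with ht
  have hta : |t| = c' := by
    rw [ht, abs_neg, abs_mul, abs_div, abs_abs, div_self hA.ne', mul_one,
      abs_of_pos hc'pos]
  have h1 := h t (by rw [hta]; exact min_le_left _ _)
  have haa : a * a = |a| * |a| := (abs_mul_abs_self a).symm
  have h2 : t * a = -(c' * |a|) := by
    rw [ht]; field_simp; nlinarith
  have h3 : t^2 = c'^2 := by rw [← sq_abs, hta]
  have h4 : t^2 * B ≤ c'^2 * |B| := by
    rw [h3]; exact mul_le_mul_of_nonneg_left (le_abs_self B) (sq_nonneg c')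
  nlinarith [h1, h2, h4, hc'pos, hA, hc'le]

/-- **Quadratic programming lemma.** If `M` is a symmetric `k × k` matrix with
nonnegative entries and strictly positive diagonal, and `v` is the minimum of the
quadratic form `uᵀMu` over the standard simplex, then there is a nonempty subset
`S` of indices such that the principal submatrix `M_S` is invertible,
`v = 1/(𝟙ᵀ M_S⁻¹ 𝟙)`, and `v` is also the minimum of the quadratic form of `M_S`
over the simplex indexed by `S`. -/
theorem qp_lemma (k : ℕ) (hk : 1 ≤ k) (M : Matrix (Fin k) (Fin k) ℝ)
    (hsymm : M.IsSymm) (hnonneg : ∀ i j, 0 ≤ M i j) (hdiag : ∀ i, 0 < M i i)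
    (v : ℝ)
    (hv : IsLeast { x : ℝ | ∃ u : Fin k → ℝ, (∀ i, 0 ≤ u i) ∧ (∑ i, u i) = 1 ∧
      x = ∑ i, ∑ j, u i * M i j * u j } v) :
    ∃ S : Finset (Fin k), S.Nonempty ∧
      IsUnit (M.submatrix (fun i : S => (i : Fin k)) (fun j : S => (j : Fin k))) ∧
      v = 1 / (∑ i : S, ∑ j : S,
        (M.submatrix (fun i : S => (i : Fin k)) (fun j : S => (j : Fin k)))⁻¹ i j) ∧
      IsLeast { x : ℝ | ∃ w : S → ℝ, (∀ i, 0 ≤ w i) ∧ (∑ i, w i) = 1 ∧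
        x = ∑ i, ∑ j, w i *
          (M.submatrix (fun i : S => (i : Fin k)) (fun j : S => (j : Fin k))) i j * w j } v := by
  classical
  obtain ⟨hvmem, hvlb⟩ := hv
  have hsy : ∀ i j, M j i = M i j := fun i j => hsymm.apply i j
  -- minimizer with minimal support
  have hex : ∃ n : ℕ, ∃ u : Fin k → ℝ, (∀ i, 0 ≤ u i) ∧ (∑ i, u i) = 1 ∧
      v = (∑ i, ∑ j, u i * M i j * u j) ∧
      (Finset.univ.filter (fun i => u i ≠ 0)).card = n := by
    obtain ⟨u, h1, h2, h3⟩ := hvmem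
    exact ⟨_, u, h1, h2, h3, rfl⟩
  obtain ⟨u, hu0, hu1, huv, hucard⟩ := Nat.find_spec hex
  set n₀ := Nat.find hex with hn₀
  set S := Finset.univ.filter (fun i => u i ≠ 0) with hSdef
  have hmemS : ∀ i, i ∈ S ↔ u i ≠ 0 := by
    intro i; simp [hSdef]
  have hsupp : ∀ i, i ∉ S → u i = 0 := by
    intro i hi; by_contra h; exact hi ((hmemS i).mpr h)
  have hpos : ∀ i ∈ S, 0 < u i := fun i hi => lt_of_le_of_ne (hu0 i) (Ne.symm ((hmemS i).mp hi))
  have hSne : S.Nonempty := by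
    by_contra h
    rw [Finset.not_nonempty_iff_eq_empty] at h
    have : (∑ i, u i) = 0 := Finset.sum_eq_zero (fun i _ => hsupp i (by simp [h]))
    rw [hu1] at this; norm_num at this
  -- the quadratic form as a function of g
  set g : Fin k → ℝ := fun i => ∑ j, M i j * u j with hgdef
  have hAg : ∀ w : Fin k → ℝ, (∑ i, ∑ j, w i * M i j * u j) = ∑ i, w i * g i := by
    intro w
    refine Finset.sum_congr rfl fun i _ => ?_
    rw [hgdef, Finset.mul_sum]
    exact Finset.sum_congr rfl fun j _ => by ring
  -- expansion of the quadratic form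
  have expand : ∀ (w : Fin k → ℝ) (t : ℝ),
      (∑ i, ∑ j, (u i + t * w i) * M i j * (u j + t * w j))
      = v + 2*t*(∑ i, w i * g i) + t^2 * (∑ i, ∑ j, w i * M i j * w j) := by
    intro w t
    have swap : (∑ i, ∑ j, u i * M i j * w j) = ∑ i, ∑ j, w i * M i j * u j := by
      rw [Finset.sum_comm]
      exact Finset.sum_congr rfl fun i _ => Finset.sum_congr rfl fun j _ => by
        rw [hsy]; ring
    have e1 : (∑ i, ∑ j, (u i + t * w i) * M i j * (u j + t * w j))
        = (∑ i, ∑ j, u i * M i j * u j) + t * (∑ i, ∑ j, w i * M i j * u j)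
          + t * (∑ i, ∑ j, u i * M i j * w j)
          + t^2 * (∑ i, ∑ j, w i * M i j * w j) := by
      simp only [Finset.mul_sum, ← Finset.sum_add_distrib]
      refine Finset.sum_congr rfl fun i _ => Finset.sum_congr rfl fun j _ => by ring
    rw [e1, swap, hAg w, ← huv]; ring
  -- the minimality applied to perturbations
  have hpert : ∀ (w : Fin k → ℝ) (t : ℝ), (∑ i, w i) = 0 →
      (∀ i, 0 ≤ u i + t * w i) →
      0 ≤ 2*t*(∑ i, w i * g i) + t^2 * (∑ i, ∑ j, w i * M i j * w j) := by
    intro w t hw0 hnn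
    have hsum : (∑ i, (u i + t * w i)) = 1 := by
      rw [Finset.sum_add_distrib, hu1, ← Finset.mul_sum, hw0]; ring
    have hmem : (∑ i, ∑ j, (u i + t * w i) * M i j * (u j + t * w j)) ∈
        { x : ℝ | ∃ u : Fin k → ℝ, (∀ i, 0 ≤ u i) ∧ (∑ i, u i) = 1 ∧
          x = ∑ i, ∑ j, u i * M i j * u j } := ⟨_, hnn, hsum, rfl⟩
    have := hvlb hmem
    rw [expand w t] at this
    linarith
  -- first-order condition: g constant (= v) on S
  have hgconst : ∀ i ∈ S, ∀ j ∈ S, g i = g j := by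
    intro i hi j hj
    by_cases hij : i = j
    · rw [hij]
    · set w : Fin k → ℝ := fun x => (if x = i then (1:ℝ) else 0) + (if x = j then (-1:ℝ) else 0)
        with hwdef
      have hw0 : (∑ x, w x) = 0 := by
        simp [hwdef, Finset.sum_add_distrib]
      have hwg : (∑ x, w x * g x) = g i - g j := by
        simp [hwdef, add_mul, ite_mul, Finset.sum_add_distrib]
        ring
      have hc : (0:ℝ) < min (u i) (u j) := lt_min (hpos i hi) (hpos j hj)
      have key : ∀ t : ℝ, |t| ≤ min (u i) (u j) →
          0 ≤ 2*t*(g i - g j) + t^2 * (∑ x, ∑ y, w x * M x y * w y) := by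
        intro t ht
        rw [← hwg]
        refine hpert w t hw0 ?_
        intro x
        by_cases hxi : x = i
        · subst hxi
          have : w x = 1 := by simp [hwdef, hij]
          rw [this]
          have := neg_abs_le t
          have := (abs_le.mp ht).1
          have := min_le_left (u x) (u j)
          linarith
        · by_cases hxj : x = j
          · subst hxj
            have : w x = -1 := by simp [hwdef, hxi]
            rw [this]
            have := (abs_le.mp ht).2
            have := min_le_right (u i) (u x)
            linarith
          · have : w x = 0 := by simp [hwdef, hxi, hxj]
            rw [this]; simpa using hu0 x
      have := aux_zero (g i - g j) (∑ x, ∑ y, w x * M x y * w y) _ hc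
        (fun t ht => by simpa [mul_comm] using key t ht)
      linarith
  have hgv : ∀ i ∈ S, g i = v := by
    obtain ⟨i₀, hi₀⟩ := hSne
    have hsumS : (∑ i ∈ S, u i) = 1 := by
      rw [← hu1]
      exact Finset.sum_subset (Finset.subset_univ S) (fun i _ hi => hsupp i hi)
    have hveq : v = g i₀ := by
      have h1 : v = ∑ i, u i * g i := by
        rw [huv, hAg u]
      have h2 : (∑ i, u i * g i) = ∑ i ∈ S, u i * g i :=
        (Finset.sum_subset (Finset.subset_univ S) (fun i _ hi => by rw [hsupp i hi]; ring)).symm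
      have h3 : (∑ i ∈ S, u i * g i) = ∑ i ∈ S, u i * g i₀ :=
        Finset.sum_congr rfl fun i hi => by rw [hgconst i hi i₀ hi₀]
      rw [h1, h2, h3, ← Finset.sum_mul, hsumS, one_mul]
    intro i hi
    rw [hgconst i hi i₀ hi₀, ← hveq]
  have hvpos : 0 < v := by
    obtain ⟨i₀, hi₀⟩ := hSne
    have hterm : ∀ i ∈ (Finset.univ : Finset (Fin k)), 0 ≤ ∑ j, u i * M i j * u j :=
      fun i _ => Finset.sum_nonneg fun j _ => by
        have := hnonneg i j; have := hu0 i; have := hu0 j; positivity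
    have ht2 : 0 < ∑ j, u i₀ * M i₀ j * u j := by
      have hone : 0 < u i₀ * M i₀ i₀ * u i₀ := by
        have := hpos i₀ hi₀; have := hdiag i₀; positivity
      refine lt_of_lt_of_le hone ?_
      refine Finset.single_le_sum (f := fun j => u i₀ * M i₀ j * u j) ?_ (Finset.mem_univ i₀)
      intro j _
      have := hnonneg i₀ j; have := hu0 i₀; have := hu0 j; positivity
    rw [huv]
    calc (0:ℝ) < ∑ j, u i₀ * M i₀ j * u j := ht2
    _ ≤ ∑ i, ∑ j, u i * M i j * u j :=
        Finset.single_le_sum hterm (Finset.mem_univ i₀)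
  -- shrink sums to S
  have hshrink : ∀ f : Fin k → ℝ, (∀ i, i ∉ S → f i = 0) →
      (∑ i, f i) = ∑ i : S, f (i : Fin k) := by
    intro f hf
    rw [Finset.sum_coe_sort S f]
    exact (Finset.sum_subset (Finset.subset_univ S) (fun i _ hi => hf i hi)).symm
  set A := M.submatrix (fun i : S => (i : Fin k)) (fun j : S => (j : Fin k)) with hAdef
  have hAunit : IsUnit A := by
    rw [Matrix.isUnit_iff_isUnit_det, isUnit_iff_ne_zero]
    intro hdet
    obtain ⟨z, hz0, hzz⟩ := Matrix.exists_mulVec_eq_zero_iff.mpr hdet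
    set z' : Fin k → ℝ := fun i => if h : i ∈ S then z ⟨i, h⟩ else 0 with hz'def
    have hz'supp : ∀ i, i ∉ S → z' i = 0 := fun i hi => by simp [hz'def, hi]
    have hMz : ∀ i ∈ S, (∑ j, M i j * z' j) = 0 := by
      intro i hi
      have h1 : (∑ j, M i j * z' j) = ∑ j : S, M i (j : Fin k) * z' (j : Fin k) :=
        hshrink (fun j => M i j * z' j) (fun j hj => by show M i j * z' j = 0; rw [hz'supp j hj]; ring)
      have h2 : (∑ j : S, M i (j : Fin k) * z' (j : Fin k)) = A.mulVec z ⟨i, hi⟩ := by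
        refine Finset.sum_congr rfl fun j _ => ?_
        simp [hAdef, hz'def, Matrix.mulVec, dotProduct]
      rw [h1, h2, hzz]
      rfl
    -- sum of z' is zero
    have hX : (∑ i, z' i * g i) = 0 := by
      rw [← hAg z']
      have hflip : (∑ i, ∑ j, z' i * M i j * u j) = ∑ i, ∑ j, u i * M i j * z' j := by
        rw [Finset.sum_comm]
        exact Finset.sum_congr rfl fun i _ => Finset.sum_congr rfl fun j _ => by
          rw [hsy]; ring
      rw [hflip]
      refine Finset.sum_eq_zero fun i _ => ?_
      by_cases hi : i ∈ S
      · have he : (∑ j, u i * M i j * z' j) = u i * ∑ j, M i j * z' j := by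
          rw [Finset.mul_sum]; exact Finset.sum_congr rfl fun j _ => by ring
        rw [he, hMz i hi, mul_zero]
      · exact Finset.sum_eq_zero fun j _ => by rw [hsupp i hi]; ring
    have hzsum : (∑ i, z' i) = 0 := by
      have h1 : (∑ i, z' i * g i) = v * ∑ i, z' i := by
        rw [Finset.mul_sum]
        refine Finset.sum_congr rfl fun i _ => ?_
        by_cases hi : i ∈ S
        · rw [hgv i hi]; ring
        · rw [hz'supp i hi]; ring
      rw [h1] at hX
      rcases mul_eq_zero.mp hX with h | h
      · exact absurd h hvpos.ne'
      · exact h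
    have hQz : (∑ i, ∑ j, z' i * M i j * z' j) = 0 := by
      refine Finset.sum_eq_zero fun i _ => ?_
      by_cases hi : i ∈ S
      · have he : (∑ j, z' i * M i j * z' j) = z' i * ∑ j, M i j * z' j := by
          rw [Finset.mul_sum]; exact Finset.sum_congr rfl fun j _ => by ring
        rw [he, hMz i hi, mul_zero]
      · exact Finset.sum_eq_zero fun j _ => by rw [hz'supp i hi]; ring
    -- there is a negative coordinate of z'
    have hneg : ∃ i, z' i < 0 := by
      by_contra h
      push_neg at h
      have hall : ∀ i ∈ (Finset.univ : Finset (Fin k)), z' i = 0 :=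
        (Finset.sum_eq_zero_iff_of_nonneg (fun i _ => h i)).mp hzsum
      apply hz0
      funext j
      have := hall (j : Fin k) (Finset.mem_univ _)
      rw [hz'def] at this
      simpa [j.2] using this
    -- move along z' until a coordinate of u hits zero
    obtain ⟨i₂, hi₂neg⟩ := hneg
    have hi₂S : i₂ ∈ S := by
      by_contra h
      rw [hz'supp i₂ h] at hi₂neg
      exact lt_irrefl 0 hi₂neg
    set T := S.filter (fun i => z' i < 0) with hTdef
    have hTne : T.Nonempty := ⟨i₂, by simp [hTdef, hi₂S, hi₂neg]⟩
    obtain ⟨i₁, hi₁T, hi₁min⟩ := T.exists_min_image (fun i => u i / (-z' i)) hTne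
    have hi₁S : i₁ ∈ S := (Finset.mem_filter.mp hi₁T).1
    have hi₁neg : z' i₁ < 0 := (Finset.mem_filter.mp hi₁T).2
    set tstar := u i₁ / (-z' i₁) with htstar
    have htpos : 0 < tstar := div_pos (hpos i₁ hi₁S) (by linarith)
    set u' : Fin k → ℝ := fun i => u i + tstar * z' i with hu'def
    have hnn : ∀ i, 0 ≤ u' i := by
      intro i
      rw [hu'def]
      show 0 ≤ u i + tstar * z' i
      by_cases hzi : 0 ≤ z' i
      · have := hu0 i; nlinarith
      · push_neg at hzi
        have hiS : i ∈ S := by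
          by_contra h
          rw [hz'supp i h] at hzi
          exact lt_irrefl 0 hzi
        have hiT : i ∈ T := Finset.mem_filter.mpr ⟨hiS, hzi⟩
        have hle : tstar ≤ u i / (-z' i) := hi₁min i hiT
        have h2 : tstar * (-z' i) ≤ u i := (le_div_iff₀ (by linarith)).mp hle
        nlinarith
    have hsum' : (∑ i, u' i) = 1 := by
      show (∑ i, (u i + tstar * z' i)) = 1
      rw [Finset.sum_add_distrib, hu1, ← Finset.mul_sum, hzsum]
      ring
    have hquad : v = ∑ i, ∑ j, u' i * M i j * u' j := by
      show v = ∑ i, ∑ j, (u i + tstar * z' i) * M i j * (u j + tstar * z' j)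
      rw [expand z' tstar, hX, hQz]
      ring
    have hu'i₁ : u' i₁ = 0 := by
      show u i₁ + tstar * z' i₁ = 0
      rw [htstar]
      have : (-z' i₁) ≠ 0 := by linarith
      field_simp
      rw [div_self (by linarith : z' i₁ ≠ 0)]; ring
    have hsub : (Finset.univ.filter (fun i => u' i ≠ 0)) ⊆ S.erase i₁ := by
      intro i hi
      rw [Finset.mem_filter] at hi
      refine Finset.mem_erase.mpr ⟨?_, ?_⟩
      · rintro rfl; exact hi.2 hu'i₁
      · by_contra h
        apply hi.2
        show u i + tstar * z' i = 0
        rw [hsupp i h, hz'supp i h]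
        ring
    have hcard : (Finset.univ.filter (fun i => u' i ≠ 0)).card < n₀ := by
      calc (Finset.univ.filter (fun i => u' i ≠ 0)).card ≤ (S.erase i₁).card :=
            Finset.card_le_card hsub
        _ < S.card := Finset.card_erase_lt_of_mem hi₁S
        _ = n₀ := hucard
    exact Nat.find_min hex hcard ⟨u', hnn, hsum', hquad, rfl⟩
  -- double-sum shrink
  have hshrink2 : ∀ f : Fin k → Fin k → ℝ, (∀ i, i ∉ S → ∀ j, f i j = 0) →
      (∀ j, j ∉ S → ∀ i, f i j = 0) →
      (∑ i, ∑ j, f i j) = ∑ i : S, ∑ j : S, f (i : Fin k) (j : Fin k) := by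
    intro f h1 h2
    rw [hshrink (fun i => ∑ j, f i j)
      (fun i hi => by show (∑ j, f i j) = 0; exact Finset.sum_eq_zero fun j _ => h1 i hi j)]
    exact Finset.sum_congr rfl fun i _ => hshrink (fun j => f (i : Fin k) j)
      (fun j hj => h2 j hj (i : Fin k))
  -- solve the linear system for u on S
  have hdetU : IsUnit A.det := (Matrix.isUnit_iff_isUnit_det A).mp hAunit
  set uS : S → ℝ := fun i => u (i : Fin k) with huSdef
  have hAu : A.mulVec uS = fun _ => v := by
    funext i
    have h1 : A.mulVec uS i = ∑ j : S, M (i : Fin k) (j : Fin k) * u (j : Fin k) := by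
      simp [hAdef, huSdef, Matrix.mulVec, dotProduct]
    have h2 : (∑ j, M (i : Fin k) j * u j)
        = ∑ j : S, M (i : Fin k) (j : Fin k) * u (j : Fin k) :=
      hshrink (fun j => M (i : Fin k) j * u j)
        (fun j hj => by show M (i : Fin k) j * u j = 0; rw [hsupp j hj]; ring)
    rw [h1, ← h2]
    exact hgv (i : Fin k) i.2
  have huSeq : uS = A⁻¹.mulVec (fun _ => v) := by
    have h := congrArg (A⁻¹.mulVec ·) hAu
    rw [Matrix.mulVec_mulVec, Matrix.nonsing_inv_mul A hdetU, Matrix.one_mulVec] at h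
    exact h
  have hsum1 : (∑ i : S, uS i) = 1 := by
    show (∑ i : S, u (i : Fin k)) = 1
    rw [← hshrink u (fun i hi => hsupp i hi)]
    exact hu1
  have hkey : 1 = v * ∑ i : S, ∑ j : S, A⁻¹ i j := by
    rw [← hsum1, huSeq]
    rw [Finset.mul_sum]
    refine Finset.sum_congr rfl fun i _ => ?_
    have : A⁻¹.mulVec (fun _ => v) i = ∑ j : S, A⁻¹ i j * v := by
      simp [Matrix.mulVec, dotProduct]
    rw [this, Finset.mul_sum]
    exact Finset.sum_congr rfl fun j _ => by ring
  have hSSne : (∑ i : S, ∑ j : S, A⁻¹ i j) ≠ 0 := by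
    intro h
    rw [h, mul_zero] at hkey
    norm_num at hkey
  refine ⟨S, hSne, hAunit, ?_, ?_, ?_⟩
  · rw [eq_div_iff hSSne]
    linarith [hkey]
  · -- membership: uS attains v
    refine ⟨uS, fun i => hu0 (i : Fin k), hsum1, ?_⟩
    have := hshrink2 (fun i j => u i * M i j * u j)
      (fun i hi j => by show u i * M i j * u j = 0; rw [hsupp i hi]; ring)
      (fun j hj i => by show u i * M i j * u j = 0; rw [hsupp j hj]; ring)
    rw [huv, this]
    rfl
  · -- lower bound
    rintro x ⟨w, hw0, hw1, hxw⟩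
    set w' : Fin k → ℝ := fun i => if h : i ∈ S then w ⟨i, h⟩ else 0 with hw'def
    have hw'supp : ∀ i, i ∉ S → w' i = 0 := fun i hi => by simp [hw'def, hi]
    have hw'co : ∀ i : S, w' (i : Fin k) = w i := by
      intro i; simp [hw'def, i.2]
    have hw'0 : ∀ i, 0 ≤ w' i := by
      intro i
      rw [hw'def]
      by_cases h : i ∈ S
      · simpa [h] using hw0 ⟨i, h⟩
      · simp [h]
    have hw'1 : (∑ i, w' i) = 1 := by
      rw [hshrink w' hw'supp]
      rw [← hw1]
      exact Finset.sum_congr rfl fun i _ => hw'co i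
    have hle : v ≤ ∑ i, ∑ j, w' i * M i j * w' j := hvlb ⟨w', hw'0, hw'1, rfl⟩
    have heq : (∑ i, ∑ j, w' i * M i j * w' j) = x := by
      rw [hshrink2 (fun i j => w' i * M i j * w' j)
        (fun i hi j => by show w' i * M i j * w' j = 0; rw [hw'supp i hi]; ring)
        (fun j hj i => by show w' i * M i j * w' j = 0; rw [hw'supp j hj]; ring)]
      rw [hxw]
      refine Finset.sum_congr rfl fun i _ => Finset.sum_congr rfl fun j _ => ?_
      rw [hw'co i, hw'co j]
      rfl
    linarith
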